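/- Equality case of the reverse Hölder inequality: Let p > 1 and let F, G be random variables with G ≠ 0 almost surely, with |F|^{1/p} and |G|^{-1/(p-1)} integrable and E[|F·G|] < ∞. Then E[|F·G|] = (E[|F|^{1/p}])^p · (E[|G|^{-1/(p-1)}])^{-(p-1)} holds if and only if there exists a deterministic constant α ≥ 0 such that |F| = α·|G|^{-p/(p-1)} almost surely. -/

import Mathlib

open MeasureTheory ProbabilityTheory Real
open scoped ENNReal NNReal

/-- Equality case of the reverse Hölder inequality. -/
theorem reverse_holder_equality_iff {Ω : Type*} [MeasurableSpace Ω]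
    (μ : Measure Ω) [IsProbabilityMeasure μ]
    (p : ℝ) (hp : 1 < p) (F G : Ω → ℝ)
    (hFm : Measurable F) (hGm : Measurable G)
    (hG0 : ∀ᵐ ω ∂μ, G ω ≠ 0)
    (hF : Integrable (fun ω => |F ω| ^ (1 / p)) μ)
    (hG : Integrable (fun ω => |G ω| ^ (-(1 / (p - 1)))) μ)
    (hFG : Integrable (fun ω => |F ω * G ω|) μ) :
    (∫ ω, |F ω * G ω| ∂μ =
        (∫ ω, |F ω| ^ (1 / p) ∂μ) ^ p *
          (∫ ω, |G ω| ^ (-(1 / (p - 1))) ∂μ) ^ (-(p - 1))) ↔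
      ∃ α : ℝ, 0 ≤ α ∧ ∀ᵐ ω ∂μ, |F ω| = α * |G ω| ^ (-(p / (p - 1))) := by
  have hp0 : (0:ℝ) < p := lt_trans one_pos hp
  have hq : (0:ℝ) < p - 1 := by linarith
  have hpne : p ≠ 0 := ne_of_gt hp0
  have hqne : p - 1 ≠ 0 := ne_of_gt hq
  set f : Ω → ℝ := fun ω => |F ω| ^ (1 / p) with hf_def
  set g : Ω → ℝ := fun ω => |G ω| ^ (-(1 / (p - 1))) with hg_def
  have hf0 : ∀ ω, 0 ≤ f ω := fun ω => rpow_nonneg (abs_nonneg _) _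
  have hg0 : ∀ ω, 0 ≤ g ω := fun ω => rpow_nonneg (abs_nonneg _) _
  have hgpos : ∀ᵐ ω ∂μ, 0 < g ω :=
    hG0.mono fun ω h => rpow_pos_of_pos (abs_pos.2 h) _
  have hfm : Measurable f := by measurability
  have hgm : Measurable g := by measurability
  -- positivity of ∫ g
  set c : ℝ := ∫ ω, g ω ∂μ with hc_def
  have hc : 0 < c := by
    rw [hc_def]
    rw [integral_pos_iff_support_of_nonneg hg0 hG]
    have hsupp : μ (Function.support g)ᶜ = 0 := by
      have hne : ∀ᵐ ω ∂μ, g ω ≠ 0 := hgpos.mono fun ω h => ne_of_gt h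
      rw [ae_iff] at hne
      simpa [Function.support, Set.compl_setOf] using hne
    have h1 : (1:ℝ≥0∞) ≤ μ (Function.support g) := by
      have h2 := measure_union_le (μ := μ) (Function.support g) (Function.support g)ᶜ
      rw [Set.union_compl_self, measure_univ, hsupp, add_zero] at h2
      exact h2
    exact lt_of_lt_of_le one_pos h1
  -- key pointwise identities
  have hfp : ∀ ω, f ω ^ p = |F ω| := by
    intro ω
    rw [hf_def, ← Real.rpow_mul (abs_nonneg _), one_div,
      inv_mul_cancel₀ (ne_of_gt hp0), rpow_one]
  have hg1p : ∀ ω, g ω ^ (1 - p) = |G ω| := by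
    intro ω
    rw [hg_def, ← Real.rpow_mul (abs_nonneg _),
      show -(1 / (p - 1)) * (1 - p) = 1 by field_simp; ring, rpow_one]
  -- the weighted measure
  set ν : Measure Ω := μ.withDensity (fun ω => ((g ω).toNNReal : ℝ≥0∞)) with hν_def
  have hν_univ : ν Set.univ = ENNReal.ofReal c := by
    have hco : (fun ω => ((g ω).toNNReal : ℝ≥0∞)) = fun ω => ENNReal.ofReal (g ω) := rfl
    rw [hν_def, hco, withDensity_apply _ MeasurableSet.univ, setLIntegral_univ,
      ← ofReal_integral_eq_lintegral_ofReal hG (Filter.Eventually.of_forall hg0)]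
  have : IsFiniteMeasure ν := ⟨by rw [hν_univ]; exact ENNReal.ofReal_lt_top⟩
  set h : Ω → ℝ := fun ω => f ω / g ω with hh_def
  have hdm : Measurable (fun ω => (g ω).toNNReal) := hgm.real_toNNReal
  -- a.e. identities for integral transfer
  have e1 : (fun ω => (g ω).toNNReal • h ω) =ᵐ[μ] f := by
    filter_upwards [hgpos] with ω hg
    simp only [hh_def, NNReal.smul_def, Real.coe_toNNReal _ (hg0 ω), smul_eq_mul]
    field_simp
  have e2 : (fun ω => (g ω).toNNReal • (h ω ^ p)) =ᵐ[μ] (fun ω => |F ω * G ω|) := by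
    filter_upwards [hgpos] with ω hg
    have hgp : (0:ℝ) < g ω ^ p := rpow_pos_of_pos hg _
    simp only [hh_def, NNReal.smul_def, Real.coe_toNNReal _ (hg0 ω), smul_eq_mul]
    rw [div_rpow (hf0 ω) (hg0 ω), abs_mul, ← hfp ω, ← hg1p ω,
      Real.rpow_sub hg, rpow_one]
    field_simp
  -- integrability over ν
  have hint1 : Integrable h ν := by
    rw [hν_def, integrable_withDensity_iff_integrable_smul hdm]
    exact hF.congr e1.symm
  have hint2 : Integrable (fun ω => h ω ^ p) ν := by
    rw [hν_def, integrable_withDensity_iff_integrable_smul hdm]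
    exact hFG.congr e2.symm
  -- averages
  have hiν1 : ∫ ω, h ω ∂ν = ∫ ω, f ω ∂μ := by
    rw [hν_def, integral_withDensity_eq_integral_smul hdm]
    exact integral_congr_ae e1
  have hiν2 : ∫ ω, h ω ^ p ∂ν = ∫ ω, |F ω * G ω| ∂μ := by
    rw [hν_def, integral_withDensity_eq_integral_smul hdm]
    exact integral_congr_ae e2
  have hνr : (ν Set.univ).toReal = c := by rw [hν_univ, ENNReal.toReal_ofReal hc.le]
  have havg1 : ⨍ ω, h ω ∂ν = (∫ ω, f ω ∂μ) / c := by
    rw [average_eq, measureReal_def, hνr, hiν1, smul_eq_mul, inv_mul_eq_div]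
  have havg2 : ⨍ ω, h ω ^ p ∂ν = (∫ ω, |F ω * G ω| ∂μ) / c := by
    rw [average_eq, measureReal_def, hνr, hiν2, smul_eq_mul, inv_mul_eq_div]
  have hA0 : 0 ≤ ∫ ω, f ω ∂μ := integral_nonneg hf0
  -- Jensen, strict version
  have hcont : ContinuousOn (fun x : ℝ => x ^ p) (Set.Ici 0) := fun x _ =>
    (Real.continuousAt_rpow_const x p (Or.inr hp0.le)).continuousWithinAt
  have jensen := (strictConvexOn_rpow hp).ae_eq_const_or_map_average_lt hcont
    isClosed_Ici
    (Filter.Eventually.of_forall fun ω => Set.mem_Ici.2 (div_nonneg (hf0 ω) (hg0 ω)))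
    hint1 hint2
  constructor
  · intro heq
    rcases jensen with hconst | hlt
    · -- h is a.e. constant
      set k : ℝ := ⨍ ω, h ω ∂ν with hk_def
      have hk0 : 0 ≤ k := by
        rw [havg1]
        exact div_nonneg hA0 hc.le
      have hconst' : ∀ᵐ ω ∂μ, ((g ω).toNNReal : ℝ≥0∞) ≠ 0 → h ω = k := by
        rw [Filter.EventuallyEq, hν_def] at hconst
        exact (ae_withDensity_iff hdm.coe_nnreal_ennreal).1 hconst
      refine ⟨k ^ p, rpow_nonneg hk0 _, ?_⟩
      filter_upwards [hconst', hgpos] with ω hck hg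
      have hne : ((g ω).toNNReal : ℝ≥0∞) ≠ 0 := by
        simp [Real.toNNReal_eq_zero, not_le, hg]
      have hfk : f ω = k * g ω := by
        have h3 := hck hne
        have h4 : f ω / g ω = k := h3
        rw [div_eq_iff (ne_of_gt hg)] at h4
        linarith
      have hFeq : |F ω| = (k * g ω) ^ p := by rw [← hfk, hfp]
      rw [hFeq, mul_rpow hk0 (hg0 ω)]
      congr 1
      show (|G ω| ^ (-(1 / (p - 1)))) ^ p = |G ω| ^ (-(p / (p - 1)))
      rw [← Real.rpow_mul (abs_nonneg _),
        show -(1 / (p - 1)) * p = -(p / (p - 1)) by field_simp]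
    · -- strict inequality contradicts the equality hypothesis
      exfalso
      rw [havg1, havg2, heq] at hlt
      have hcp : c ^ (-(p - 1)) = c / c ^ p := by
        rw [eq_div_iff (ne_of_gt (rpow_pos_of_pos hc p)), ← Real.rpow_add hc,
          show -(p - 1) + p = 1 by ring, rpow_one]
      have hceq : ((∫ ω, f ω ∂μ) / c) ^ p
          = (∫ ω, f ω ∂μ) ^ p * c ^ (-(p - 1)) / c := by
        rw [div_rpow hA0 hc.le, hcp]
        field_simp
      rw [hceq] at hlt
      exact lt_irrefl _ hlt
  · rintro ⟨α, hα, hae⟩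
    have key1 : ∀ᵐ ω ∂μ, f ω = α ^ (1 / p) * g ω := by
      filter_upwards [hae] with ω hω
      show |F ω| ^ (1 / p) = α ^ (1 / p) * |G ω| ^ (-(1 / (p - 1)))
      rw [hω, mul_rpow hα (rpow_nonneg (abs_nonneg _) _),
        ← Real.rpow_mul (abs_nonneg _),
        show -(p / (p - 1)) * (1 / p) = -(1 / (p - 1)) by field_simp]
    have key2 : ∀ᵐ ω ∂μ, |F ω * G ω| = α * g ω := by
      filter_upwards [hae, hG0] with ω hω hGne
      have hGpos : 0 < |G ω| := abs_pos.2 hGne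
      show |F ω * G ω| = α * |G ω| ^ (-(1 / (p - 1)))
      rw [abs_mul, hω, mul_assoc]
      congr 1
      nth_rewrite 2 [← Real.rpow_one |G ω|]
      rw [← Real.rpow_add hGpos,
        show -(p / (p - 1)) + 1 = -(1 / (p - 1)) by field_simp; ring]
    have hB' : ∫ ω, |F ω * G ω| ∂μ = α * c := by
      rw [integral_congr_ae key2, integral_const_mul]
    have hA' : ∫ ω, f ω ∂μ = α ^ (1 / p) * c := by
      rw [integral_congr_ae key1, integral_const_mul]
    rw [hB', hA', mul_rpow (rpow_nonneg hα _) hc.le,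
      ← Real.rpow_mul hα, one_div, inv_mul_cancel₀ hpne, rpow_one,
      mul_assoc, ← Real.rpow_add hc,
      show p + -(p - 1) = 1 by ring, rpow_one]
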